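/- Fix α>0 and L>0, and let Z be a symmetric random variable with P(|Z| ≥ t) = exp(−min{t², (t/L)^α}) for all t ≥ 0. Then min{√2, 2^{1/α}} ≤ ‖Z‖_{φ_{α,L}} ≤ max{√3, 3^{1/α}}. -/

import Mathlib

open MeasureTheory ProbabilityTheory Real

open Set Filter Topology

/-- The Generalized Bernstein-Orlicz function `φ_{α,L}(x) = exp(min{x², (x/L)^α}) − 1`. -/
noncomputable def phiGBO (α L x : ℝ) : ℝ := Real.exp (min (x ^ 2) ((x / L) ^ α)) - 1

/-- The `g`-Orlicz norm `‖X‖_g = inf{η > 0 : E[g(|X|/η)] ≤ 1}`. -/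
noncomputable def orliczNorm {Ω : Type*} {mΩ : MeasurableSpace Ω} (μ : Measure Ω)
    (g : ℝ → ℝ) (X : Ω → ℝ) : ℝ :=
  sInf {η : ℝ | 0 < η ∧ ∫⁻ ω, ENNReal.ofReal (g (|X ω| / η)) ∂μ ≤ 1}

namespace GBOAux


/-- the kernel `m(t) = min(t², (t/L)^α)` -/
noncomputable def mfun (α L t : ℝ) : ℝ := min (t ^ 2) ((t / L) ^ α)

lemma mfun_nonneg {α L : ℝ} (hL : 0 < L) {t : ℝ} (ht : 0 ≤ t) : 0 ≤ mfun α L t :=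
  le_min (sq_nonneg t) (Real.rpow_nonneg (div_nonneg ht hL.le) α)

lemma mfun_continuous {α L : ℝ} (hα : 0 < α) : Continuous (mfun α L) := by
  refine Continuous.min (by continuity) ?_
  have h : Continuous fun t : ℝ => t ^ α :=
    continuous_iff_continuousAt.mpr fun x => Real.continuousAt_rpow_const x α (Or.inr hα.le)
  exact h.comp (continuous_id.div_const L)

lemma mfun_mono {α L : ℝ} (hα : 0 < α) (hL : 0 < L) {a b : ℝ} (ha : 0 ≤ a) (hab : a ≤ b) :
    mfun α L a ≤ mfun α L b :=
  min_le_min (pow_le_pow_left₀ ha hab 2)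
    (Real.rpow_le_rpow (div_nonneg ha hL.le) ((div_le_div_iff_of_pos_right hL).mpr hab) hα.le)

lemma mfun_strict {α L : ℝ} (hα : 0 < α) (hL : 0 < L) {a b : ℝ} (ha : 0 ≤ a) (hab : a < b) :
    mfun α L a < mfun α L b := by
  refine lt_min ?_ ?_
  · exact (min_le_left _ _).trans_lt (pow_lt_pow_left₀ hab ha two_ne_zero)
  · exact (min_le_right _ _).trans_lt
      (Real.rpow_lt_rpow (div_nonneg ha hL.le) ((div_lt_div_iff_of_pos_right hL).mpr hab) hα)

lemma mfun_surj {α L : ℝ} (hα : 0 < α) (hL : 0 < L) {u : ℝ} (hu : 0 ≤ u) :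
    ∃ s, 0 ≤ s ∧ mfun α L s = u := by
  set T : ℝ := max (Real.sqrt u) (L * u ^ (1 / α)) with hT
  have hT0 : 0 ≤ T := (Real.sqrt_nonneg u).trans (le_max_left _ _)
  have h1 : u ≤ T ^ 2 := by
    have h : Real.sqrt u ≤ T := le_max_left _ _
    nlinarith [Real.sq_sqrt hu, Real.sqrt_nonneg u]
  have h2 : u ≤ (T / L) ^ α := by
    have h3 : u ^ (1 / α) ≤ T / L := (le_div_iff₀ hL).mpr (by rw [mul_comm]; exact le_max_right _ _)
    calc u = (u ^ (1 / α)) ^ α := by rw [one_div, Real.rpow_inv_rpow hu hα.ne']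
    _ ≤ (T / L) ^ α := Real.rpow_le_rpow (Real.rpow_nonneg hu _) h3 hα.le
  have h0 : mfun α L 0 = 0 := by
    simp [mfun, Real.zero_rpow hα.ne', zero_div]
  have hIVT := intermediate_value_Icc hT0 ((mfun_continuous (L := L) hα).continuousOn)
  have hu' : u ∈ Icc (mfun α L 0) (mfun α L T) := by
    rw [h0]; exact ⟨hu, le_min h1 h2⟩
  obtain ⟨s, hs, hsu⟩ := hIVT hu'
  exact ⟨s, hs.1, hsu⟩

lemma key_integral {c : ℝ} (hc : 1 < c) :
    ∫⁻ s in Ioi (0 : ℝ), ENNReal.ofReal ((1 + s) ^ (-c)) = ENNReal.ofReal ((c - 1)⁻¹) := by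
  have hc0 : (0 : ℝ) < c - 1 := by linarith
  set g : ℝ → ℝ := fun s => -(c - 1)⁻¹ * (1 + s) ^ (1 - c) with hg
  have hderiv : ∀ x ∈ Ici (0 : ℝ), HasDerivAt g ((1 + x) ^ (-c)) x := by
    intro x hx
    simp only [mem_Ici] at hx
    have hx1 : (0 : ℝ) < 1 + x := by linarith
    have h1 : HasDerivAt (fun s : ℝ => 1 + s) 1 x := (hasDerivAt_id x).const_add 1
    have h2 : HasDerivAt (fun y : ℝ => y ^ (1 - c)) ((1 - c) * (1 + x) ^ (1 - c - 1)) (1 + x) :=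
      Real.hasDerivAt_rpow_const (Or.inl hx1.ne')
    have h3 := (h2.comp x h1).const_mul (-(c - 1)⁻¹)
    have h3' : HasDerivAt g (-(c - 1)⁻¹ * ((1 - c) * (1 + x) ^ (1 - c - 1) * 1)) x := h3
    have he : 1 - c - 1 = -c := by ring
    rw [he] at h3'
    convert h3' using 1
    linear_combination (-(1 + x) ^ (-c)) * inv_mul_cancel₀ hc0.ne'
  have htend : Tendsto g atTop (𝓝 0) := by
    have h1 : Tendsto (fun s : ℝ => (1 + s) ^ (1 - c)) atTop (𝓝 0) := by
      have h2 : Tendsto (fun s : ℝ => 1 + s) atTop atTop :=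
        tendsto_atTop_add_const_left _ 1 tendsto_id
      have := (tendsto_rpow_neg_atTop hc0).comp h2
      simpa [neg_sub, Function.comp_def] using this
    have := h1.const_mul (-(c - 1)⁻¹)
    simp only [mul_zero] at this
    exact this
  have hpos : ∀ x ∈ Ioi (0 : ℝ), 0 ≤ (1 + x) ^ (-c) := fun x hx =>
    Real.rpow_nonneg (by simp only [mem_Ioi] at hx; linarith) _
  have hval : ∫ x in Ioi (0 : ℝ), (1 + x) ^ (-c) = (c - 1)⁻¹ := by
    rw [integral_Ioi_of_hasDerivAt_of_nonneg' hderiv hpos htend]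
    simp [hg, Real.one_rpow]
  have hint : IntegrableOn (fun x => (1 + x) ^ (-c)) (Ioi (0 : ℝ)) :=
    integrableOn_Ioi_deriv_of_nonneg' hderiv hpos htend
  rw [← ofReal_integral_eq_lintegral_ofReal hint
    ((ae_restrict_iff' measurableSet_Ioi).mpr (ae_of_all _ hpos)), hval]


lemma tailW {α L : ℝ} (hα : 0 < α) (hL : 0 < L)
    {Ω : Type} [MeasurableSpace Ω] (μ : Measure Ω) (Z : Ω → ℝ)
    (hZtail : ∀ t : ℝ, 0 ≤ t →
      μ {ω | t ≤ |Z ω|} = ENNReal.ofReal (Real.exp (-min (t ^ 2) ((t / L) ^ α))))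
    {u : ℝ} (hu : 0 ≤ u) :
    μ {ω | u ≤ mfun α L |Z ω|} = ENNReal.ofReal (Real.exp (-u)) := by
  obtain ⟨s, hs0, hsu⟩ := mfun_surj hα hL hu
  have hset : {ω | u ≤ mfun α L |Z ω|} = {ω | s ≤ |Z ω|} := by
    ext ω
    simp only [Set.mem_setOf_eq]
    constructor
    · intro h
      by_contra hlt
      push_neg at hlt
      exact absurd h (not_le.mpr (hsu ▸ mfun_strict hα hL (abs_nonneg _) hlt))
    · intro h
      exact hsu ▸ mfun_mono hα hL hs0 h
  rw [hset, hZtail s hs0]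
  congr 1
  rw [show min (s ^ 2) ((s / L) ^ α) = u from hsu]

lemma LC {α L : ℝ} (hα : 0 < α) (hL : 0 < L)
    {Ω : Type} [MeasurableSpace Ω] (μ : Measure Ω) [IsProbabilityMeasure μ]
    (Z : Ω → ℝ) (hZ : Measurable Z)
    (hZtail : ∀ t : ℝ, 0 ≤ t →
      μ {ω | t ≤ |Z ω|} = ENNReal.ofReal (Real.exp (-min (t ^ 2) ((t / L) ^ α))))
    {c : ℝ} (hc : 1 < c) :
    ∫⁻ ω, ENNReal.ofReal (Real.exp (mfun α L |Z ω| / c) - 1) ∂μ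
      = ENNReal.ofReal ((c - 1)⁻¹) := by
  have hc0 : (0 : ℝ) < c := by linarith
  have f_nn : 0 ≤ᵐ[μ] fun ω => Real.exp (mfun α L |Z ω| / c) - 1 := by
    refine ae_of_all _ fun ω => ?_
    have h1 : (0:ℝ) ≤ mfun α L |Z ω| := mfun_nonneg hL (abs_nonneg _)
    have h2 : (1:ℝ) ≤ Real.exp (mfun α L |Z ω| / c) := Real.one_le_exp (by positivity)
    simp only [Pi.zero_apply]
    linarith
  have f_mble : AEMeasurable (fun ω => Real.exp (mfun α L |Z ω| / c) - 1) μ := by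
    have : Continuous fun t : ℝ => Real.exp (mfun α L t / c) - 1 := by
      exact (Real.continuous_exp.comp ((mfun_continuous hα).div_const c)).sub continuous_const
    exact (this.measurable.comp hZ.abs).aemeasurable
  rw [lintegral_eq_lintegral_meas_le μ f_nn f_mble]
  have hcongr : ∀ s ∈ Ioi (0:ℝ),
      μ {a | s ≤ Real.exp (mfun α L |Z a| / c) - 1} = ENNReal.ofReal ((1 + s) ^ (-c)) := by
    intro s hs
    simp only [mem_Ioi] at hs
    have h1s : (0:ℝ) < 1 + s := by linarith
    have hset : {a | s ≤ Real.exp (mfun α L |Z a| / c) - 1}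
        = {a | c * Real.log (1 + s) ≤ mfun α L |Z a|} := by
      ext a
      simp only [Set.mem_setOf_eq]
      constructor
      · intro h
        have h2 : 1 + s ≤ Real.exp (mfun α L |Z a| / c) := by linarith
        have h3 := (Real.log_le_iff_le_exp h1s).mpr h2
        have h4 := (le_div_iff₀ hc0).mp h3
        linarith [h4]
      · intro h
        have h3 : Real.log (1 + s) ≤ mfun α L |Z a| / c :=
          (le_div_iff₀ hc0).mpr (by linarith)
        have h2 := (Real.log_le_iff_le_exp h1s).mp h3
        linarith
    have hu : (0:ℝ) ≤ c * Real.log (1 + s) :=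
      mul_nonneg hc0.le (Real.log_nonneg (by linarith))
    rw [hset, tailW hα hL μ Z hZtail hu]
    congr 1
    rw [Real.rpow_def_of_pos h1s]
    ring_nf
  rw [setLIntegral_congr_fun measurableSet_Ioi hcongr]
  exact key_integral hc


end GBOAux

open GBOAux

/-- the GBO norm of a symmetric random variable with survival function
`exp(−min{t², (t/L)^α})` lies between `min{√2, 2^{1/α}}` and `max{√3, 3^{1/α}}`. -/
theorem GBO_norm_of_Z (α L : ℝ) (hα : 0 < α) (hL : 0 < L)
    (Ω : Type) [MeasurableSpace Ω] (μ : Measure Ω) [IsProbabilityMeasure μ]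
    (Z : Ω → ℝ) (hZ : Measurable Z)
    (hZsymm : Measure.map Z μ = Measure.map (fun ω => -(Z ω)) μ)
    (hZtail : ∀ t : ℝ, 0 ≤ t →
      μ {ω | t ≤ |Z ω|} = ENNReal.ofReal (Real.exp (-min (t ^ 2) ((t / L) ^ α)))) :
    min (Real.sqrt 2) ((2 : ℝ) ^ (1 / α)) ≤ orliczNorm μ (phiGBO α L) Z ∧
      orliczNorm μ (phiGBO α L) Z ≤ max (Real.sqrt 3) ((3 : ℝ) ^ (1 / α)) := by
  set S : Set ℝ :=
    {η : ℝ | 0 < η ∧ ∫⁻ ω, ENNReal.ofReal (phiGBO α L (|Z ω| / η)) ∂μ ≤ 1} with hS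
  have horl : orliczNorm μ (phiGBO α L) Z = sInf S := rfl
  set ub : ℝ := max (Real.sqrt 3) ((3 : ℝ) ^ (1 / α)) with hub
  have hub_pos : 0 < ub :=
    lt_of_lt_of_le (Real.sqrt_pos.mpr (by norm_num)) (le_max_left _ _)
  have hub2 : (3 : ℝ) ≤ ub ^ 2 := by
    have h := Real.sq_sqrt (by norm_num : (0:ℝ) ≤ 3)
    nlinarith [le_max_left (Real.sqrt 3) ((3 : ℝ) ^ (1 / α)), Real.sqrt_nonneg 3]
  have hubα : (3 : ℝ) ≤ ub ^ α := by
    have h1 : (3 : ℝ) ^ (1 / α) ≤ ub := le_max_right _ _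
    calc (3 : ℝ) = ((3 : ℝ) ^ (1 / α)) ^ α := by
          rw [one_div, Real.rpow_inv_rpow (by norm_num) hα.ne']
    _ ≤ ub ^ α := Real.rpow_le_rpow (Real.rpow_nonneg (by norm_num) _) h1 hα.le
  have hub_mem : ub ∈ S := by
    refine ⟨hub_pos, ?_⟩
    have hptwise : ∀ ω, phiGBO α L (|Z ω| / ub) ≤ Real.exp (mfun α L |Z ω| / 3) - 1 := by
      intro ω
      have hx0 : 0 ≤ |Z ω| := abs_nonneg _
      set x := |Z ω| with hxdef
      have hmin : min ((x / ub) ^ 2) ((x / ub / L) ^ α) ≤ mfun α L x / 3 := by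
        have e1 : (x / ub) ^ 2 = x ^ 2 / ub ^ 2 := div_pow x ub 2
        have e2 : (x / ub / L) ^ α = (x / L) ^ α / ub ^ α := by
          rw [div_div, mul_comm, ← div_div,
            Real.div_rpow (div_nonneg hx0 hL.le) hub_pos.le]
        rw [e1, e2]
        have b1 : x ^ 2 / ub ^ 2 ≤ x ^ 2 / 3 :=
          div_le_div_of_nonneg_left (sq_nonneg x) (by norm_num) hub2
        have b2 : (x / L) ^ α / ub ^ α ≤ (x / L) ^ α / 3 :=
          div_le_div_of_nonneg_left (Real.rpow_nonneg (div_nonneg hx0 hL.le) _)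
            (by norm_num) hubα
        calc min (x ^ 2 / ub ^ 2) ((x / L) ^ α / ub ^ α)
            ≤ min (x ^ 2 / 3) ((x / L) ^ α / 3) := min_le_min b1 b2
        _ = mfun α L x / 3 := min_div_div_right (by norm_num) _ _
      exact sub_le_sub_right (Real.exp_le_exp.mpr hmin) 1
    calc ∫⁻ ω, ENNReal.ofReal (phiGBO α L (|Z ω| / ub)) ∂μ
        ≤ ∫⁻ ω, ENNReal.ofReal (Real.exp (mfun α L |Z ω| / 3) - 1) ∂μ :=
          lintegral_mono fun ω => ENNReal.ofReal_le_ofReal (hptwise ω)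
      _ = ENNReal.ofReal (((3 : ℝ) - 1)⁻¹) := LC hα hL μ Z hZ hZtail (by norm_num)
      _ ≤ 1 := by rw [ENNReal.ofReal_le_one]; norm_num
  have hSne : S.Nonempty := ⟨ub, hub_mem⟩
  have hbdd : BddBelow S := ⟨0, fun x hx => hx.1.le⟩
  rw [horl]
  constructor
  · refine le_csInf hSne fun η hη => ?_
    by_contra hlt
    push_neg at hlt
    obtain ⟨hη0, hint⟩ := hη
    have hη2 : η ^ 2 < 2 := by
      have h1 : η < Real.sqrt 2 := lt_of_lt_of_le hlt (min_le_left _ _)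
      nlinarith [Real.sq_sqrt (by norm_num : (0:ℝ) ≤ 2)]
    have hηα : η ^ α < 2 := by
      have h1 : η < (2 : ℝ) ^ (1 / α) := lt_of_lt_of_le hlt (min_le_right _ _)
      calc η ^ α < ((2 : ℝ) ^ (1 / α)) ^ α := Real.rpow_lt_rpow hη0.le h1 hα
      _ = 2 := by rw [one_div, Real.rpow_inv_rpow (by norm_num) hα.ne']
    set k : ℝ := max (η ^ 2) (η ^ α) with hk
    have hkpos : 0 < k := lt_of_lt_of_le (pow_pos hη0 2) (le_max_left _ _)
    set k₀ : ℝ := max k (3 / 2) with hk₀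
    have hk₀1 : 1 < k₀ := lt_of_lt_of_le (by norm_num) (le_max_right _ _)
    have hk₀2 : k₀ < 2 := max_lt (max_lt hη2 hηα) (by norm_num)
    have hkk₀ : k ≤ k₀ := le_max_left _ _
    have hk₀pos : 0 < k₀ := lt_trans one_pos hk₀1
    have hptwise : ∀ ω, Real.exp (mfun α L |Z ω| / k₀) - 1 ≤ phiGBO α L (|Z ω| / η) := by
      intro ω
      have hx0 : 0 ≤ |Z ω| := abs_nonneg _
      set x := |Z ω| with hxdef
      have hm0 : 0 ≤ mfun α L x := mfun_nonneg hL hx0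
      have step1 : mfun α L x / k₀ ≤ mfun α L x / k :=
        div_le_div_of_nonneg_left hm0 hkpos hkk₀
      have step2 : mfun α L x / k ≤ min ((x / η) ^ 2) ((x / η / L) ^ α) := by
        refine le_min ?_ ?_
        · rw [div_pow]
          exact div_le_div₀ (sq_nonneg x) (min_le_left _ _) (pow_pos hη0 2) (le_max_left _ _)
        · have e2 : (x / η / L) ^ α = (x / L) ^ α / η ^ α := by
            rw [div_div, mul_comm, ← div_div,
              Real.div_rpow (div_nonneg hx0 hL.le) hη0.le]
          rw [e2]
          exact div_le_div₀ (Real.rpow_nonneg (div_nonneg hx0 hL.le) _) (min_le_right _ _)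
            (Real.rpow_pos_of_pos hη0 α) (le_max_right _ _)
      exact sub_le_sub_right (Real.exp_le_exp.mpr (step1.trans step2)) 1
    have hge : ENNReal.ofReal ((k₀ - 1)⁻¹) ≤ 1 := by
      calc ENNReal.ofReal ((k₀ - 1)⁻¹)
          = ∫⁻ ω, ENNReal.ofReal (Real.exp (mfun α L |Z ω| / k₀) - 1) ∂μ :=
            (LC hα hL μ Z hZ hZtail hk₀1).symm
        _ ≤ ∫⁻ ω, ENNReal.ofReal (phiGBO α L (|Z ω| / η)) ∂μ :=
            lintegral_mono fun ω => ENNReal.ofReal_le_ofReal (hptwise ω)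
        _ ≤ 1 := hint
    rw [ENNReal.ofReal_le_one] at hge
    have hpos : (0:ℝ) < k₀ - 1 := by linarith
    have hcancel : (k₀ - 1) * (k₀ - 1)⁻¹ = 1 := mul_inv_cancel₀ hpos.ne'
    nlinarith [inv_pos.mpr hpos]
  · exact csInf_le hbdd hub_mem
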